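/- The operators A_1(i) = (1/2)(I − |i⟩⟨i|), i = 1,2,3, form a POVM on ℂ³, and each A_1(i) as well as A_2(1) = (1/2)|φ⟩⟨φ| and A_2(2) = I − A_2(1) equals a sum of elements of the POVM G = {(1/2)|1⟩⟨1|, (1/2)|2⟩⟨2|, (1/2)|3⟩⟨3|, (1/2)|φ⟩⟨φ|, (1/2)(I−|φ⟩⟨φ|)} (i.e., A_1 and A_2 are coexistent, being contained in the range of G). -/

import Mathlib

open Matrix ComplexOrder

/-- The computational basis vector `|i⟩` of ℂ³. -/
def e (i : Fin 3) : Fin 3 → ℂ := fun j => if j = i then 1 else 0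

/-- The vector `|φ⟩ = (1/√3)(|1⟩ + |2⟩ + |3⟩)`. -/
noncomputable def φ : Fin 3 → ℂ := fun _ => 1 / (Real.sqrt 3 : ℂ)

/-- Rank-one projector `|v⟩⟨v|` as a matrix. -/
noncomputable def proj (v : Fin 3 → ℂ) : Matrix (Fin 3) (Fin 3) ℂ :=
  Matrix.vecMulVec v (star v)

/-- The five-outcome POVM of Reeb, Reitzner and Wolf. -/
noncomputable def Gop : Fin 5 → Matrix (Fin 3) (Fin 3) ℂ
  | 0 => (1 / 2 : ℂ) • proj (e 0)
  | 1 => (1 / 2 : ℂ) • proj (e 1)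
  | 2 => (1 / 2 : ℂ) • proj (e 2)
  | 3 => (1 / 2 : ℂ) • proj φ
  | 4 => (1 / 2 : ℂ) • ((1 : Matrix (Fin 3) (Fin 3) ℂ) - proj φ)

/-- The POVM `A₁(i) = (1/2)(I − |i⟩⟨i|)`. -/
noncomputable def A1 (i : Fin 3) : Matrix (Fin 3) (Fin 3) ℂ :=
  (1 / 2 : ℂ) • ((1 : Matrix (Fin 3) (Fin 3) ℂ) - proj (e i))

/-- The POVM `A₂ = {(1/2)|φ⟩⟨φ|, I − (1/2)|φ⟩⟨φ|}`. -/
noncomputable def A2 : Fin 2 → Matrix (Fin 3) (Fin 3) ℂ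
  | 0 => (1 / 2 : ℂ) • proj φ
  | 1 => 1 - (1 / 2 : ℂ) • proj φ



lemma hermφ (i j : Fin 3) : φ i * (starRingEnd ℂ) (φ j) = 1 / 3 := by
  simp only [φ]
  rw [show ((1 / (Real.sqrt 3 : ℂ)) : ℂ) = ((1 / Real.sqrt 3 : ℝ) : ℂ) by push_cast; ring]
  rw [Complex.conj_ofReal, ← Complex.ofReal_mul,
    show (1 / Real.sqrt 3) * (1 / Real.sqrt 3) = 1 / 3 by
      rw [div_mul_div_comm, one_mul, Real.mul_self_sqrt (by norm_num)]]
  norm_num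

lemma proj_φ_apply (i j : Fin 3) : proj φ i j = 1 / 3 := by
  simp only [proj, vecMulVec_apply, Pi.star_apply, Complex.star_def]
  exact hermφ i j

lemma A1_0 : A1 0 = Gop 1 + Gop 2 := by
  ext a b
  fin_cases a <;> fin_cases b <;>
    simp [A1, Gop, proj, e, vecMulVec, Matrix.one_apply]

lemma A1_1 : A1 1 = Gop 0 + Gop 2 := by
  ext a b
  fin_cases a <;> fin_cases b <;>
    simp [A1, Gop, proj, e, vecMulVec, Matrix.one_apply]

lemma A1_2 : A1 2 = Gop 0 + Gop 1 := by
  ext a b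
  fin_cases a <;> fin_cases b <;>
    simp [A1, Gop, proj, e, vecMulVec, Matrix.one_apply]

lemma half_psd {M : Matrix (Fin 3) (Fin 3) ℂ} (h : M.PosSemidef) :
    ((1 / 2 : ℂ) • M).PosSemidef := by
  constructor
  · rw [Matrix.IsHermitian, conjTranspose_smul, h.1]
    norm_num
  · intro x
    exact (h.smul (show (0 : ℂ) ≤ 1 / 2 by norm_num [Complex.le_def])).2 x

lemma proj_psd (v : Fin 3 → ℂ) : (proj v).PosSemidef := by
  have : proj v = replicateCol Unit v * (replicateCol Unit v)ᴴ := by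
    ext a b
    simp [proj, vecMulVec, Matrix.mul_apply, replicateCol, conjTranspose_apply]
  rw [this]
  exact posSemidef_self_mul_conjTranspose _

lemma one_sub_proj_psd : ((1 : Matrix (Fin 3) (Fin 3) ℂ) - proj φ).PosSemidef := by
  have : (1 : Matrix (Fin 3) (Fin 3) ℂ) - proj φ
      = ((1 : Matrix (Fin 3) (Fin 3) ℂ) - proj φ)ᴴ * ((1 : Matrix (Fin 3) (Fin 3) ℂ) - proj φ) := by
    ext a b
    fin_cases a <;> fin_cases b <;>
      · simp [Matrix.mul_apply, Fin.sum_univ_three, conjTranspose_apply, Matrix.sub_apply,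
          Matrix.one_apply, proj_φ_apply]
        norm_num
  rw [this]
  exact posSemidef_conjTranspose_mul_self _

theorem stmt_14 :
    (∀ i, (A1 i).PosSemidef) ∧ (∑ i : Fin 3, A1 i = 1) ∧
    (∀ i, ∃ S : Finset (Fin 5), A1 i = ∑ lam ∈ S, Gop lam) ∧
    (∀ j, ∃ S : Finset (Fin 5), A2 j = ∑ lam ∈ S, Gop lam) := by
  have hG : ∀ k : Fin 5, (Gop k).PosSemidef := by
    intro k
    fin_cases k
    · exact half_psd (proj_psd _)
    · exact half_psd (proj_psd _)
    · exact half_psd (proj_psd _)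
    · exact half_psd (proj_psd _)
    · exact half_psd one_sub_proj_psd
  refine ⟨?_, ?_, ?_, ?_⟩
  · intro i
    fin_cases i
    · show (A1 0).PosSemidef
      rw [A1_0]; exact (hG 1).add (hG 2)
    · show (A1 1).PosSemidef
      rw [A1_1]; exact (hG 0).add (hG 2)
    · show (A1 2).PosSemidef
      rw [A1_2]; exact (hG 0).add (hG 1)
  · ext a b
    fin_cases a <;> fin_cases b <;>
      simp [A1, proj, e, vecMulVec, Fin.sum_univ_three, Matrix.one_apply] <;> norm_num
  · intro i
    fin_cases i
    · exact ⟨{1, 2}, by show A1 0 = _; rw [A1_0]; simp⟩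
    · exact ⟨{0, 2}, by show A1 1 = _; rw [A1_1]; simp⟩
    · exact ⟨{0, 1}, by show A1 2 = _; rw [A1_2]; simp⟩
  · intro j
    fin_cases j
    · exact ⟨{3}, by simp [A2, Gop]⟩
    · refine ⟨{0, 1, 2, 4}, ?_⟩
      show A2 1 = _
      ext a b
      fin_cases a <;> fin_cases b <;>
        simp [A2, Gop, proj, e, vecMulVec, Matrix.one_apply, hermφ] <;> norm_num
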